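/- Let p ≥ 3, q ≥ 3 and let Y₁,…,Y_q partition {1,…,n} (n = pq) with |Yᵢ| = p. Let D = {x : |x|=4, ∃i, x ⊆ Yᵢ} in J(n,4). Then D is not completely regular: there exist two vertices at distance 2 from D having different numbers of neighbors at distance 1 from D. Specifically, if {1,2} ⊆ Y₁, {3,4} ⊆ Y₂, 5 ∈ Y₃, then {1,2,3,4} has 4(p−2) neighbors in D₁ while {1,2,3,5} has 2(p−2) neighbors in D₁, where D₁ = {x : |x|=4, ∃i, |x ∩ Yᵢ| = 3}. -/
import Mathlib

open Finset

private lemma card_le_two_of_subset_pair {α : Type*} [DecidableEq α] {s : Finset α} {u v : α}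
    (h : s ⊆ {u, v}) : s.card ≤ 2 := by
  have h1 := card_le_card h
  have h2 := card_insert_le u ({v} : Finset α)
  simp only [card_singleton] at h2
  omega

private lemma fiber_card {n q : ℕ} (Y : Fin q → Finset (Fin n)) (x T : Finset (Fin n))
    (hT : T ⊆ x) (hT3 : T.card = 3) :
    (univ.filter (fun y : Finset (Fin n) =>
        (y.card = 4 ∧ ∃ i, (y ∩ Y i).card = 3) ∧ x ∩ y = T)).card
      = (univ.filter (fun f : Fin n =>
        f ∉ x ∧ ∃ i, ((insert f T) ∩ Y i).card = 3)).card := by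
  have himg : (univ.filter (fun y : Finset (Fin n) =>
        (y.card = 4 ∧ ∃ i, (y ∩ Y i).card = 3) ∧ x ∩ y = T))
      = (univ.filter (fun f : Fin n =>
        f ∉ x ∧ ∃ i, ((insert f T) ∩ Y i).card = 3)).image (fun f => insert f T) := by
    ext y
    simp only [mem_filter, mem_image, mem_univ, true_and]
    constructor
    · rintro ⟨⟨hy4, hi⟩, hxy⟩
      have hTy : T ⊆ y := hxy ▸ inter_subset_right
      have h1 : (y \ T).card = 1 := by rw [card_sdiff_of_subset hTy, hy4, hT3]
      obtain ⟨f, hf⟩ := card_eq_one.mp h1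
      have hfy : f ∈ y \ T := hf ▸ mem_singleton_self f
      rw [mem_sdiff] at hfy
      have hfT : f ∉ T := hfy.2
      have hyeq : insert f T = y := by
        apply eq_of_subset_of_card_le
        · exact insert_subset hfy.1 hTy
        · rw [card_insert_of_notMem hfT, hT3, hy4]
      have hfx : f ∉ x := by
        intro hfx
        exact hfT (hxy ▸ mem_inter.mpr ⟨hfx, hfy.1⟩)
      exact ⟨f, ⟨hfx, by rw [hyeq]; exact hi⟩, hyeq⟩
    · rintro ⟨f, ⟨hfx, hi⟩, rfl⟩
      have hfT : f ∉ T := fun h => hfx (hT h)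
      refine ⟨⟨by rw [card_insert_of_notMem hfT, hT3], hi⟩, ?_⟩
      rw [inter_insert_of_notMem hfx, inter_eq_right.mpr hT]
  rw [himg]
  apply card_image_of_injOn
  intro f hf g hg hfg
  simp only [coe_filter, Set.mem_setOf_eq, mem_univ, true_and] at hf hg
  have hfT : f ∉ T := fun h => hf.1 (hT h)
  simp only at hfg
  have : f ∈ insert g T := hfg ▸ mem_insert_self f T
  rcases mem_insert.mp this with h | h
  · exact h
  · exact absurd h hfT

private lemma fiber_two {n q : ℕ} (Y : Fin q → Finset (Fin n))
    (hdisj : ∀ i j, i ≠ j → Disjoint (Y i) (Y j))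
    {j : Fin q} {u v w : Fin n} {x T : Finset (Fin n)}
    (hu : u ∈ Y j) (hv : v ∈ Y j) (hw : w ∉ Y j) (huv : u ≠ v)
    (hux : u ∈ x) (hvx : v ∈ x)
    (hTform : T = {u, v, w}) :
    (univ.filter (fun f : Fin n =>
        f ∉ x ∧ ∃ i, ((insert f T) ∩ Y i).card = 3)) = Y j \ x := by
  subst hTform
  ext f
  simp only [mem_filter, mem_univ, true_and, mem_sdiff]
  constructor
  · rintro ⟨hfx, i, hcard⟩
    refine ⟨?_, hfx⟩
    by_cases hij : i = j
    · subst hij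
      have hsub : (insert f {u, v, w} : Finset (Fin n)) ∩ Y i ⊆ insert f {u, v} := by
        intro z hz
        rw [mem_inter] at hz
        obtain ⟨hz1, hz2⟩ := hz
        simp only [mem_insert, mem_singleton] at hz1 ⊢
        rcases hz1 with rfl | rfl | rfl | rfl
        · left; rfl
        · right; left; rfl
        · right; right; rfl
        · exact absurd hz2 hw
      have hle : (insert f ({u, v} : Finset (Fin n))).card ≤
          ((insert f {u, v, w} : Finset (Fin n)) ∩ Y i).card := by
        have h1 := card_insert_le f ({u, v} : Finset (Fin n))
        have h2 := card_insert_le u ({v} : Finset (Fin n))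
        simp only [card_singleton] at h2
        omega
      have heq := eq_of_subset_of_card_le hsub hle
      have hfmem : f ∈ (insert f {u, v, w} : Finset (Fin n)) ∩ Y i :=
        heq ▸ mem_insert_self f _
      exact (mem_inter.mp hfmem).2
    · exfalso
      have hsub : (insert f {u, v, w} : Finset (Fin n)) ∩ Y i ⊆ {w, f} := by
        intro z hz
        rw [mem_inter] at hz
        obtain ⟨hz1, hz2⟩ := hz
        simp only [mem_insert, mem_singleton] at hz1 ⊢
        rcases hz1 with rfl | rfl | rfl | rfl
        · right; rfl
        · exact absurd hu (disjoint_left.mp (hdisj i j hij) hz2)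
        · exact absurd hv (disjoint_left.mp (hdisj i j hij) hz2)
        · left; rfl
      have := card_le_two_of_subset_pair hsub
      omega
  · rintro ⟨hfj, hfx⟩
    refine ⟨hfx, j, ?_⟩
    have hfu : f ≠ u := fun h => hfx (h ▸ hux)
    have hfv : f ≠ v := fun h => hfx (h ▸ hvx)
    have heq : (insert f {u, v, w} : Finset (Fin n)) ∩ Y j = {f, u, v} := by
      ext z
      simp only [mem_inter, mem_insert, mem_singleton]
      constructor
      · rintro ⟨h1, h2⟩
        rcases h1 with rfl | rfl | rfl | rfl
        · left; rfl
        · right; left; rfl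
        · right; right; rfl
        · exact absurd h2 hw
      · rintro (rfl | rfl | rfl)
        · exact ⟨Or.inl rfl, hfj⟩
        · exact ⟨Or.inr (Or.inl rfl), hu⟩
        · exact ⟨Or.inr (Or.inr (Or.inl rfl)), hv⟩
    rw [heq, card_insert_of_notMem (by simp [hfu, hfv]),
      card_insert_of_notMem (by simp [huv]), card_singleton]

private lemma fiber_zero {n q : ℕ} (Y : Fin q → Finset (Fin n))
    (hdisj : ∀ i j, i ≠ j → Disjoint (Y i) (Y j))
    {j₁ j₂ j₃ : Fin q} {u v w : Fin n} {x T : Finset (Fin n)}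
    (h12 : j₁ ≠ j₂) (h13 : j₁ ≠ j₃) (h23 : j₂ ≠ j₃)
    (hu : u ∈ Y j₁) (hv : v ∈ Y j₂) (hw : w ∈ Y j₃)
    (hTform : T = {u, v, w}) :
    (univ.filter (fun f : Fin n =>
        f ∉ x ∧ ∃ i, ((insert f T) ∩ Y i).card = 3)) = ∅ := by
  subst hTform
  ext f
  simp only [mem_filter, mem_univ, true_and, notMem_empty, iff_false, not_and]
  rintro hfx ⟨i, hcard⟩
  have hboundu : u ∈ Y i → i = j₁ := fun h => by
    by_contra hne; exact disjoint_left.mp (hdisj i j₁ hne) h hu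
  have hboundv : v ∈ Y i → i = j₂ := fun h => by
    by_contra hne; exact disjoint_left.mp (hdisj i j₂ hne) h hv
  have hboundw : w ∈ Y i → i = j₃ := fun h => by
    by_contra hne; exact disjoint_left.mp (hdisj i j₃ hne) h hw
  by_cases hi1 : i = j₁
  · have hsub : (insert f {u, v, w} : Finset (Fin n)) ∩ Y i ⊆ {u, f} := by
      intro z hz
      rw [mem_inter] at hz
      obtain ⟨hz1, hz2⟩ := hz
      simp only [mem_insert, mem_singleton] at hz1 ⊢
      rcases hz1 with rfl | rfl | rfl | rfl
      · right; rfl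
      · left; rfl
      · exact absurd (hboundv hz2) (hi1 ▸ h12)
      · exact absurd (hboundw hz2) (hi1 ▸ h13)
    have := card_le_two_of_subset_pair hsub; omega
  · by_cases hi2 : i = j₂
    · have hsub : (insert f {u, v, w} : Finset (Fin n)) ∩ Y i ⊆ {v, f} := by
        intro z hz
        rw [mem_inter] at hz
        obtain ⟨hz1, hz2⟩ := hz
        simp only [mem_insert, mem_singleton] at hz1 ⊢
        rcases hz1 with rfl | rfl | rfl | rfl
        · right; rfl
        · exact absurd (hboundu hz2) hi1
        · left; rfl
        · exact absurd (hboundw hz2) (hi2 ▸ h23)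
      have := card_le_two_of_subset_pair hsub; omega
    · have hsub : (insert f {u, v, w} : Finset (Fin n)) ∩ Y i ⊆ {w, f} := by
        intro z hz
        rw [mem_inter] at hz
        obtain ⟨hz1, hz2⟩ := hz
        simp only [mem_insert, mem_singleton] at hz1 ⊢
        rcases hz1 with rfl | rfl | rfl | rfl
        · right; rfl
        · exact absurd (hboundu hz2) hi1
        · exact absurd (hboundv hz2) hi2
        · left; rfl
      have := card_le_two_of_subset_pair hsub; omega

private lemma three_subset_classify {α : Type*} [DecidableEq α] {a b c d : α} {T : Finset α}
    (hab : a ≠ b) (hac : a ≠ c) (had : a ≠ d) (hbc : b ≠ c) (hbd : b ≠ d) (hcd : c ≠ d)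
    (hT : T ⊆ {a, b, c, d}) (hT3 : T.card = 3) :
    T = {b, c, d} ∨ T = {a, c, d} ∨ T = {a, b, d} ∨ T = {a, b, c} := by
  have hx4 : ({a, b, c, d} : Finset α).card = 4 := by
    rw [card_insert_of_notMem (by simp [hab, hac, had]),
      card_insert_of_notMem (by simp [hbc, hbd]),
      card_insert_of_notMem (by simp [hcd]), card_singleton]
  have h1 : (({a, b, c, d} : Finset α) \ T).card = 1 := by
    rw [card_sdiff_of_subset hT, hx4, hT3]
  obtain ⟨z, hz⟩ := card_eq_one.mp h1
  have hzmem : z ∈ ({a, b, c, d} : Finset α) \ T := hz ▸ mem_singleton_self z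
  rw [mem_sdiff] at hzmem
  have hTeq : T = ({a, b, c, d} : Finset α) \ {z} := by
    ext t
    simp only [mem_sdiff, mem_singleton]
    constructor
    · intro ht
      exact ⟨hT ht, fun h => hzmem.2 (h ▸ ht)⟩
    · rintro ⟨h1', h2'⟩
      by_contra hcon
      have : t ∈ ({a, b, c, d} : Finset α) \ T := mem_sdiff.mpr ⟨h1', hcon⟩
      rw [hz, mem_singleton] at this
      exact h2' this
  have hzx := hzmem.1
  simp only [mem_insert, mem_singleton] at hzx
  rcases hzx with rfl | rfl | rfl | rfl
  · left; rw [hTeq]; ext t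
    simp only [mem_sdiff, mem_insert, mem_singleton]
    constructor
    · rintro ⟨h1', h2'⟩; tauto
    · rintro (rfl | rfl | rfl) <;> exact ⟨by tauto, by tauto⟩
  · right; left; rw [hTeq]; ext t
    simp only [mem_sdiff, mem_insert, mem_singleton]
    constructor
    · rintro ⟨h1', h2'⟩; tauto
    · rintro (rfl | rfl | rfl) <;> exact ⟨by tauto, by tauto⟩
  · right; right; left; rw [hTeq]; ext t
    simp only [mem_sdiff, mem_insert, mem_singleton]
    constructor
    · rintro ⟨h1', h2'⟩; tauto
    · rintro (rfl | rfl | rfl) <;> exact ⟨by tauto, by tauto⟩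
  · right; right; right; rw [hTeq]; ext t
    simp only [mem_sdiff, mem_insert, mem_singleton]
    constructor
    · rintro ⟨h1', h2'⟩; tauto
    · rintro (rfl | rfl | rfl) <;> exact ⟨by tauto, by tauto⟩
set_option maxHeartbeats 2000000 in
/-- the code of 4-subsets of the blocks of a partition into `q ≥ 3` blocks
of size `p ≥ 3` is not completely regular in `J(n,4)`: the two explicit vertices at
distance 2 from the code have `4(p-2)` resp. `2(p-2)` neighbors at distance 1. -/
theorem stmt8 (n p q : ℕ) (hp : 3 ≤ p) (hq : 3 ≤ q)
    (Y : Fin q → Finset (Fin n))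
    (hcard : ∀ i, (Y i).card = p)
    (hdisj : ∀ i j, i ≠ j → Disjoint (Y i) (Y j))
    (hunion : ∀ v : Fin n, ∃ i, v ∈ Y i)
    (i₁ i₂ i₃ : Fin q) (h12 : i₁ ≠ i₂) (h13 : i₁ ≠ i₃) (h23 : i₂ ≠ i₃)
    (a b c d e : Fin n) (hab : a ≠ b) (hcd : c ≠ d)
    (ha : a ∈ Y i₁) (hb : b ∈ Y i₁) (hc : c ∈ Y i₂) (hd : d ∈ Y i₂) (he : e ∈ Y i₃) :
    ∀ D₁ : Finset (Finset (Fin n)),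
      D₁ = Finset.univ.filter (fun x => x.card = 4 ∧ ∃ i, (x ∩ Y i).card = 3) →
      (D₁.filter (fun y => (({a, b, c, d} : Finset (Fin n)) ∩ y).card = 3)).card
          = 4 * (p - 2) ∧
      (D₁.filter (fun y => (({a, b, c, e} : Finset (Fin n)) ∩ y).card = 3)).card
          = 2 * (p - 2) ∧
      4 * (p - 2) ≠ 2 * (p - 2) := by
  intro D₁ hD₁
  subst hD₁
  have blkeq : ∀ {z : Fin n} {i j : Fin q}, z ∈ Y i → z ∈ Y j → i = j := by
    intro z i j hi hj
    by_contra h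
    exact disjoint_left.mp (hdisj i j h) hi hj
  -- distinctness
  have hac : a ≠ c := fun h => h12 (blkeq (h ▸ ha) hc)
  have had : a ≠ d := fun h => h12 (blkeq (h ▸ ha) hd)
  have hbc : b ≠ c := fun h => h12 (blkeq (h ▸ hb) hc)
  have hbd : b ≠ d := fun h => h12 (blkeq (h ▸ hb) hd)
  have hae : a ≠ e := fun h => h13 (blkeq (h ▸ ha) he)
  have hbe : b ≠ e := fun h => h13 (blkeq (h ▸ hb) he)
  have hce : c ≠ e := fun h => h23 (blkeq (h ▸ hc) he)
  have hde : d ≠ e := fun h => h23 (blkeq (h ▸ hd) he)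
  have hba := hab.symm
  have hca := hac.symm
  have hda := had.symm
  have hcb := hbc.symm
  have hdb := hbd.symm
  have hdc := hcd.symm
  have hea := hae.symm
  have heb := hbe.symm
  have hec := hce.symm
  -- block non-memberships
  have haY2 : a ∉ Y i₂ := fun h => h12 (blkeq ha h)
  have hbY2 : b ∉ Y i₂ := fun h => h12 (blkeq hb h)
  have hcY1 : c ∉ Y i₁ := fun h => h12 (blkeq h hc)
  have hdY1 : d ∉ Y i₁ := fun h => h12 (blkeq h hd)
  have heY1 : e ∉ Y i₁ := fun h => h13 (blkeq h he)
  have heY2 : e ∉ Y i₂ := fun h => h23 (blkeq h he)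
  refine ⟨?_, ?_, by omega⟩
  · -- first count : x = {a,b,c,d}
    rw [filter_filter]
    have Hmem : ∀ y ∈ univ.filter (fun y : Finset (Fin n) =>
        (y.card = 4 ∧ ∃ i, (y ∩ Y i).card = 3) ∧
          (({a, b, c, d} : Finset (Fin n)) ∩ y).card = 3),
        ({a, b, c, d} : Finset (Fin n)) ∩ y ∈
          ({{b, c, d}, {a, c, d}, {a, b, d}, {a, b, c}} : Finset (Finset (Fin n))) := by
      intro y hy
      simp only [mem_filter, mem_univ, true_and] at hy
      have := three_subset_classify hab hac had hbc hbd hcd inter_subset_left hy.2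
      simp only [mem_insert, mem_singleton]
      tauto
    rw [card_eq_sum_card_fiberwise Hmem]
    have hne1 : ({b, c, d} : Finset (Fin n)) ≠ {a, c, d} := by
      intro h
      have : a ∈ ({b, c, d} : Finset (Fin n)) := by rw [h]; simp
      simp only [mem_insert, mem_singleton] at this
      tauto
    have hne2 : ({b, c, d} : Finset (Fin n)) ≠ {a, b, d} := by
      intro h
      have : a ∈ ({b, c, d} : Finset (Fin n)) := by rw [h]; simp
      simp only [mem_insert, mem_singleton] at this
      tauto
    have hne3 : ({b, c, d} : Finset (Fin n)) ≠ {a, b, c} := by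
      intro h
      have : a ∈ ({b, c, d} : Finset (Fin n)) := by rw [h]; simp
      simp only [mem_insert, mem_singleton] at this
      tauto
    have hne4 : ({a, c, d} : Finset (Fin n)) ≠ {a, b, d} := by
      intro h
      have : c ∈ ({a, b, d} : Finset (Fin n)) := by rw [← h]; simp
      simp only [mem_insert, mem_singleton] at this
      tauto
    have hne5 : ({a, c, d} : Finset (Fin n)) ≠ {a, b, c} := by
      intro h
      have : d ∈ ({a, b, c} : Finset (Fin n)) := by rw [← h]; simp
      simp only [mem_insert, mem_singleton] at this
      tauto
    have hne6 : ({a, b, d} : Finset (Fin n)) ≠ {a, b, c} := by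
      intro h
      have : d ∈ ({a, b, c} : Finset (Fin n)) := by rw [← h]; simp
      simp only [mem_insert, mem_singleton] at this
      tauto
    rw [sum_insert (by simp [hne1, hne2, hne3]), sum_insert (by simp [hne4, hne5]),
      sum_insert (by simp [hne6]), sum_singleton]
    have hfib : ∀ T : Finset (Fin n), T ⊆ {a, b, c, d} → T.card = 3 →
        ((univ.filter (fun y : Finset (Fin n) =>
          (y.card = 4 ∧ ∃ i, (y ∩ Y i).card = 3) ∧
            (({a, b, c, d} : Finset (Fin n)) ∩ y).card = 3)).filter
          (fun y => ({a, b, c, d} : Finset (Fin n)) ∩ y = T)).card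
        = (univ.filter (fun f : Fin n =>
            f ∉ ({a, b, c, d} : Finset (Fin n)) ∧
              ∃ i, ((insert f T) ∩ Y i).card = 3)).card := by
      intro T hTsub hT3
      rw [filter_filter]
      have hcongr : (univ.filter (fun y : Finset (Fin n) =>
          ((y.card = 4 ∧ ∃ i, (y ∩ Y i).card = 3) ∧
            (({a, b, c, d} : Finset (Fin n)) ∩ y).card = 3) ∧
            ({a, b, c, d} : Finset (Fin n)) ∩ y = T))
          = univ.filter (fun y : Finset (Fin n) =>
            (y.card = 4 ∧ ∃ i, (y ∩ Y i).card = 3) ∧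
              ({a, b, c, d} : Finset (Fin n)) ∩ y = T) := by
        apply filter_congr
        intro y _
        constructor
        · rintro ⟨⟨h1, _⟩, h3⟩; exact ⟨h1, h3⟩
        · rintro ⟨h1, h3⟩; exact ⟨⟨h1, by rw [h3, hT3]⟩, h3⟩
      rw [hcongr]
      exact fiber_card Y _ T hTsub hT3
    rw [hfib {b, c, d} (by intro z hz; simp only [mem_insert, mem_singleton] at hz ⊢; tauto)
        (by rw [card_insert_of_notMem (by simp [hbc, hbd]),
          card_insert_of_notMem (by simp [hcd]), card_singleton]),
      hfib {a, c, d} (by intro z hz; simp only [mem_insert, mem_singleton] at hz ⊢; tauto)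
        (by rw [card_insert_of_notMem (by simp [hac, had]),
          card_insert_of_notMem (by simp [hcd]), card_singleton]),
      hfib {a, b, d} (by intro z hz; simp only [mem_insert, mem_singleton] at hz ⊢; tauto)
        (by rw [card_insert_of_notMem (by simp [hab, had]),
          card_insert_of_notMem (by simp [hbd]), card_singleton]),
      hfib {a, b, c} (by intro z hz; simp only [mem_insert, mem_singleton] at hz ⊢; tauto)
        (by rw [card_insert_of_notMem (by simp [hab, hac]),
          card_insert_of_notMem (by simp [hbc]), card_singleton])]
    have hform1 : ({b, c, d} : Finset (Fin n)) = {c, d, b} := by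
      ext z; simp only [mem_insert, mem_singleton]; tauto
    have hform2 : ({a, c, d} : Finset (Fin n)) = {c, d, a} := by
      ext z; simp only [mem_insert, mem_singleton]; tauto
    have hform3 : ({a, b, d} : Finset (Fin n)) = {a, b, d} := rfl
    have hform4 : ({a, b, c} : Finset (Fin n)) = {a, b, c} := rfl
    rw [fiber_two Y hdisj hc hd hbY2 hcd (by simp) (by simp) hform1,
      fiber_two Y hdisj hc hd haY2 hcd (by simp) (by simp) hform2,
      fiber_two Y hdisj ha hb hdY1 hab (by simp) (by simp) hform3,
      fiber_two Y hdisj ha hb hcY1 hab (by simp) (by simp) hform4]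
    have hY1 : (Y i₁ \ ({a, b, c, d} : Finset (Fin n))).card = p - 2 := by
      have hsd : Y i₁ \ ({a, b, c, d} : Finset (Fin n)) = Y i₁ \ {a, b} := by
        ext z
        simp only [mem_sdiff, mem_insert, mem_singleton]
        constructor
        · rintro ⟨h1, h2⟩; exact ⟨h1, fun h => h2 (by tauto)⟩
        · rintro ⟨h1, h2⟩
          refine ⟨h1, ?_⟩
          rintro (rfl | rfl | rfl | rfl)
          · exact h2 (Or.inl rfl)
          · exact h2 (Or.inr rfl)
          · exact hcY1 h1
          · exact hdY1 h1
      rw [hsd, card_sdiff_of_subset (by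
          intro z hz; simp only [mem_insert, mem_singleton] at hz
          rcases hz with rfl | rfl
          exacts [ha, hb]),
        hcard i₁, card_insert_of_notMem (by simp [hab]), card_singleton]
    have hY2 : (Y i₂ \ ({a, b, c, d} : Finset (Fin n))).card = p - 2 := by
      have hsd : Y i₂ \ ({a, b, c, d} : Finset (Fin n)) = Y i₂ \ {c, d} := by
        ext z
        simp only [mem_sdiff, mem_insert, mem_singleton]
        constructor
        · rintro ⟨h1, h2⟩; exact ⟨h1, fun h => h2 (by tauto)⟩
        · rintro ⟨h1, h2⟩
          refine ⟨h1, ?_⟩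
          rintro (rfl | rfl | rfl | rfl)
          · exact haY2 h1
          · exact hbY2 h1
          · exact h2 (Or.inl rfl)
          · exact h2 (Or.inr rfl)
      rw [hsd, card_sdiff_of_subset (by
          intro z hz; simp only [mem_insert, mem_singleton] at hz
          rcases hz with rfl | rfl
          exacts [hc, hd]),
        hcard i₂, card_insert_of_notMem (by simp [hcd]), card_singleton]
    rw [hY1, hY2]
    omega
  · -- second count : x = {a,b,c,e}
    rw [filter_filter]
    have Hmem : ∀ y ∈ univ.filter (fun y : Finset (Fin n) =>
        (y.card = 4 ∧ ∃ i, (y ∩ Y i).card = 3) ∧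
          (({a, b, c, e} : Finset (Fin n)) ∩ y).card = 3),
        ({a, b, c, e} : Finset (Fin n)) ∩ y ∈
          ({{b, c, e}, {a, c, e}, {a, b, e}, {a, b, c}} : Finset (Finset (Fin n))) := by
      intro y hy
      simp only [mem_filter, mem_univ, true_and] at hy
      have := three_subset_classify hab hac hae hbc hbe hce inter_subset_left hy.2
      simp only [mem_insert, mem_singleton]
      tauto
    rw [card_eq_sum_card_fiberwise Hmem]
    have hne1 : ({b, c, e} : Finset (Fin n)) ≠ {a, c, e} := by
      intro h
      have : a ∈ ({b, c, e} : Finset (Fin n)) := by rw [h]; simp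
      simp only [mem_insert, mem_singleton] at this
      tauto
    have hne2 : ({b, c, e} : Finset (Fin n)) ≠ {a, b, e} := by
      intro h
      have : a ∈ ({b, c, e} : Finset (Fin n)) := by rw [h]; simp
      simp only [mem_insert, mem_singleton] at this
      tauto
    have hne3 : ({b, c, e} : Finset (Fin n)) ≠ {a, b, c} := by
      intro h
      have : a ∈ ({b, c, e} : Finset (Fin n)) := by rw [h]; simp
      simp only [mem_insert, mem_singleton] at this
      tauto
    have hne4 : ({a, c, e} : Finset (Fin n)) ≠ {a, b, e} := by
      intro h
      have : c ∈ ({a, b, e} : Finset (Fin n)) := by rw [← h]; simp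
      simp only [mem_insert, mem_singleton] at this
      tauto
    have hne5 : ({a, c, e} : Finset (Fin n)) ≠ {a, b, c} := by
      intro h
      have : e ∈ ({a, b, c} : Finset (Fin n)) := by rw [← h]; simp
      simp only [mem_insert, mem_singleton] at this
      tauto
    have hne6 : ({a, b, e} : Finset (Fin n)) ≠ {a, b, c} := by
      intro h
      have : e ∈ ({a, b, c} : Finset (Fin n)) := by rw [← h]; simp
      simp only [mem_insert, mem_singleton] at this
      tauto
    rw [sum_insert (by simp [hne1, hne2, hne3]), sum_insert (by simp [hne4, hne5]),
      sum_insert (by simp [hne6]), sum_singleton]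
    have hfib : ∀ T : Finset (Fin n), T ⊆ {a, b, c, e} → T.card = 3 →
        ((univ.filter (fun y : Finset (Fin n) =>
          (y.card = 4 ∧ ∃ i, (y ∩ Y i).card = 3) ∧
            (({a, b, c, e} : Finset (Fin n)) ∩ y).card = 3)).filter
          (fun y => ({a, b, c, e} : Finset (Fin n)) ∩ y = T)).card
        = (univ.filter (fun f : Fin n =>
            f ∉ ({a, b, c, e} : Finset (Fin n)) ∧
              ∃ i, ((insert f T) ∩ Y i).card = 3)).card := by
      intro T hTsub hT3
      rw [filter_filter]
      have hcongr : (univ.filter (fun y : Finset (Fin n) =>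
          ((y.card = 4 ∧ ∃ i, (y ∩ Y i).card = 3) ∧
            (({a, b, c, e} : Finset (Fin n)) ∩ y).card = 3) ∧
            ({a, b, c, e} : Finset (Fin n)) ∩ y = T))
          = univ.filter (fun y : Finset (Fin n) =>
            (y.card = 4 ∧ ∃ i, (y ∩ Y i).card = 3) ∧
              ({a, b, c, e} : Finset (Fin n)) ∩ y = T) := by
        apply filter_congr
        intro y _
        constructor
        · rintro ⟨⟨h1, _⟩, h3⟩; exact ⟨h1, h3⟩
        · rintro ⟨h1, h3⟩; exact ⟨⟨h1, by rw [h3, hT3]⟩, h3⟩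
      rw [hcongr]
      exact fiber_card Y _ T hTsub hT3
    rw [hfib {b, c, e} (by intro z hz; simp only [mem_insert, mem_singleton] at hz ⊢; tauto)
        (by rw [card_insert_of_notMem (by simp [hbc, hbe]),
          card_insert_of_notMem (by simp [hce]), card_singleton]),
      hfib {a, c, e} (by intro z hz; simp only [mem_insert, mem_singleton] at hz ⊢; tauto)
        (by rw [card_insert_of_notMem (by simp [hac, hae]),
          card_insert_of_notMem (by simp [hce]), card_singleton]),
      hfib {a, b, e} (by intro z hz; simp only [mem_insert, mem_singleton] at hz ⊢; tauto)
        (by rw [card_insert_of_notMem (by simp [hab, hae]),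
          card_insert_of_notMem (by simp [hbe]), card_singleton]),
      hfib {a, b, c} (by intro z hz; simp only [mem_insert, mem_singleton] at hz ⊢; tauto)
        (by rw [card_insert_of_notMem (by simp [hab, hac]),
          card_insert_of_notMem (by simp [hbc]), card_singleton])]
    rw [fiber_zero Y hdisj h12 h13 h23 hb hc he rfl,
      fiber_zero Y hdisj h12 h13 h23 ha hc he rfl,
      fiber_two Y hdisj ha hb heY1 hab (by simp) (by simp) rfl,
      fiber_two Y hdisj ha hb hcY1 hab (by simp) (by simp) rfl]
    have hY1 : (Y i₁ \ ({a, b, c, e} : Finset (Fin n))).card = p - 2 := by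
      have hsd : Y i₁ \ ({a, b, c, e} : Finset (Fin n)) = Y i₁ \ {a, b} := by
        ext z
        simp only [mem_sdiff, mem_insert, mem_singleton]
        constructor
        · rintro ⟨h1, h2⟩; exact ⟨h1, fun h => h2 (by tauto)⟩
        · rintro ⟨h1, h2⟩
          refine ⟨h1, ?_⟩
          rintro (rfl | rfl | rfl | rfl)
          · exact h2 (Or.inl rfl)
          · exact h2 (Or.inr rfl)
          · exact hcY1 h1
          · exact heY1 h1
      rw [hsd, card_sdiff_of_subset (by
          intro z hz; simp only [mem_insert, mem_singleton] at hz
          rcases hz with rfl | rfl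
          exacts [ha, hb]),
        hcard i₁, card_insert_of_notMem (by simp [hab]), card_singleton]
    rw [hY1, card_empty]
    omega
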